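/- arXiv:2201.01269 — 3 statements merged into one kernel-verified Lean document; each statement's English description precedes it below -/
import Mathlib

section
/- Let X be a nonnegative real random variable on a probability space, and for λ ≥ 0 define its log-Laplace transform φ(λ) := −log E[exp(−λ X)] (which is a finite nonnegative real number since exp(−λX) ∈ (0,1]). Then the following are equivalent: (i) for every ε > 0 one has P(X < ε) > 0 (i.e. 0 lies in the support of the law of X); (ii) φ(λ)/λ → 0 as λ → ∞. -/
open MeasureTheory Filter

/-- For a nonnegative random variable `X` on a probability space `(Ω, P)` with
log-Laplace transform `φ(λ) = -log E[exp(-λ X)]`, zero lies in the support of the law of `X`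
(i.e. `P(X < ε) > 0` for every `ε > 0`) if and only if `φ(λ)/λ → 0` as `λ → ∞`. -/
theorem stmt_0 {Ω : Type*} [MeasurableSpace Ω] (P : Measure Ω) [IsProbabilityMeasure P]
    (X : Ω → ℝ) (hXmeas : Measurable X) (hX0 : ∀ᵐ ω ∂P, 0 ≤ X ω)
    (φ : ℝ → ℝ) (hφ : ∀ l : ℝ, 0 ≤ l → φ l = -Real.log (∫ ω, Real.exp (-l * X ω) ∂P)) :
    (∀ ε : ℝ, 0 < ε → 0 < P {ω | X ω < ε}) ↔
      Tendsto (fun l : ℝ => φ l / l) atTop (nhds 0) := by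
  have hmeas : ∀ l : ℝ, Measurable fun ω => Real.exp (-l * X ω) :=
    fun l => Real.measurable_exp.comp (hXmeas.const_mul (-l))
  have hint : ∀ l : ℝ, 0 ≤ l → Integrable (fun ω => Real.exp (-l * X ω)) P := by
    intro l hl
    refine (integrable_const (1:ℝ)).mono' (hmeas l).aestronglyMeasurable ?_
    filter_upwards [hX0] with ω hω
    rw [Real.norm_eq_abs, abs_of_pos (Real.exp_pos _)]
    exact Real.exp_le_one_iff.2 (mul_nonpos_of_nonpos_of_nonneg (neg_nonpos.2 hl) hω)
  have hE1 : ∀ l : ℝ, 0 ≤ l → (∫ ω, Real.exp (-l * X ω) ∂P) ≤ 1 := by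
    intro l hl
    have := integral_mono_ae (hint l hl) (integrable_const (1:ℝ))
      (by filter_upwards [hX0] with ω hω;
          exact Real.exp_le_one_iff.2 (mul_nonpos_of_nonpos_of_nonneg (neg_nonpos.2 hl) hω))
    simpa using this
  have hEpos : ∀ l : ℝ, 0 ≤ l → 0 < ∫ ω, Real.exp (-l * X ω) ∂P := by
    intro l hl
    rw [integral_pos_iff_support_of_nonneg_ae
      (Eventually.of_forall fun ω => (Real.exp_pos _).le) (hint l hl)]
    have hs : Function.support (fun ω => Real.exp (-l * X ω)) = Set.univ := by
      ext ω; simp [Function.support, (Real.exp_pos (-l * X ω)).ne']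
    rw [hs]; simp
  have hφ0 : ∀ l : ℝ, 0 ≤ l → 0 ≤ φ l := by
    intro l hl
    rw [hφ l hl, neg_nonneg]
    exact Real.log_nonpos (hEpos l hl).le (hE1 l hl)
  have hlow : ∀ ε l : ℝ, 0 < ε → 0 ≤ l →
      Real.exp (-l * ε) * (P {ω | X ω < ε}).toReal ≤ ∫ ω, Real.exp (-l * X ω) ∂P := by
    intro ε l hε hl
    have hS : MeasurableSet {ω | X ω < ε} := hXmeas measurableSet_Iio
    calc Real.exp (-l * ε) * (P {ω | X ω < ε}).toReal
        = ∫ _ in {ω | X ω < ε}, Real.exp (-l * ε) ∂P := by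
          rw [setIntegral_const, smul_eq_mul, mul_comm]; rfl
      _ ≤ ∫ ω in {ω | X ω < ε}, Real.exp (-l * X ω) ∂P := by
          refine setIntegral_mono_on ((integrable_const _).integrableOn)
            ((hint l hl).integrableOn) hS ?_
          intro ω hω
          exact Real.exp_le_exp.2 (by nlinarith [Set.mem_setOf.1 hω])
      _ ≤ ∫ ω, Real.exp (-l * X ω) ∂P :=
          setIntegral_le_integral (hint l hl) (Eventually.of_forall fun ω => (Real.exp_pos _).le)
  constructor
  · intro h
    refine tendsto_order.2 ⟨fun a ha => ?_, fun a ha => ?_⟩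
    · filter_upwards [eventually_ge_atTop (1:ℝ)] with l hl
      exact lt_of_lt_of_le ha (div_nonneg (hφ0 l (by linarith)) (by linarith))
    · -- upper bound
      have hp : 0 < (P {ω | X ω < a / 2}).toReal :=
        ENNReal.toReal_pos (h (a/2) (by linarith)).ne' (measure_ne_top _ _)
    -- let c = -log p ≥ 0
      set p := (P {ω | X ω < a / 2}).toReal with hpdef
      have hp1 : p ≤ 1 := by
        rw [hpdef]
        exact ENNReal.toReal_le_of_le_ofReal one_pos.le (by simpa using prob_le_one)
      set c := -Real.log p with hcdef
      have hc0 : 0 ≤ c := by rw [hcdef, neg_nonneg]; exact Real.log_nonpos hp.le hp1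
      have hcl : Tendsto (fun l : ℝ => c / l) atTop (nhds 0) :=
        tendsto_const_nhds.div_atTop tendsto_id
      have hev : ∀ᶠ l : ℝ in atTop, c / l < a / 2 :=
        hcl.eventually_lt_const (by linarith)
      filter_upwards [hev, eventually_ge_atTop (1:ℝ)] with l hcl2 hl1
      have hl0 : (0:ℝ) < l := by linarith
      have key : φ l ≤ l * (a/2) + c := by
        rw [hφ l hl0.le]
        have h1 : Real.exp (-l * (a/2)) * p ≤ ∫ ω, Real.exp (-l * X ω) ∂P :=
          hlow (a/2) l (by linarith) hl0.le
        have h2 : Real.log (Real.exp (-l * (a/2)) * p) ≤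
            Real.log (∫ ω, Real.exp (-l * X ω) ∂P) :=
          Real.log_le_log (by positivity) h1
        rw [Real.log_mul (Real.exp_pos _).ne' hp.ne', Real.log_exp] at h2
        rw [hcdef]; linarith
      have : φ l / l ≤ a/2 + c / l := by
        rw [div_le_iff₀ hl0]
        have : (a/2 + c/l) * l = l * (a/2) + c := by field_simp
        rw [this]; exact key
      linarith
  · intro h ε hε
    by_contra hc
    have hP0 : P {ω | X ω < ε} = 0 := by
      simpa [pos_iff_ne_zero, not_not] using hc
    have hae : ∀ᵐ ω ∂P, ε ≤ X ω := by
      rw [ae_iff]; simpa [not_le] using hP0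
    have hev : ∀ᶠ l : ℝ in atTop, ε ≤ φ l / l := by
      filter_upwards [eventually_ge_atTop (1:ℝ)] with l hl1
      have hl0 : (0:ℝ) < l := by linarith
      have hEb : (∫ ω, Real.exp (-l * X ω) ∂P) ≤ Real.exp (-l * ε) := by
        have := integral_mono_ae (hint l hl0.le) (integrable_const (Real.exp (-l * ε)))
          (by filter_upwards [hae] with ω hω
              exact Real.exp_le_exp.2 (by nlinarith))
        simpa using this
      have hlog : Real.log (∫ ω, Real.exp (-l * X ω) ∂P) ≤ -l * ε := by
        have := Real.log_le_log (hEpos l hl0.le) hEb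
        rwa [Real.log_exp] at this
      have : l * ε ≤ φ l := by rw [hφ l hl0.le]; linarith
      rw [le_div_iff₀ hl0]
      linarith [this]
    have := ge_of_tendsto h hev
    linarith
end

section
/- Let (p_n)_{n≥1} and (q_n)_{n≥1} be nonincreasing deterministic sequences of nonnegative real numbers with Σ_{n≥1} p_n = 1. Let (A_n)_{n≥1} be a sequence of independent, identically distributed, almost surely positive real random variables, and assume S := Σ_{k≥1} A_k p_k < ∞ almost surely. Define the random weights p̃_n := A_n p_n / S for n ≥ 1. Then E[Σ_{n≥1} p̃_n q_n] ≤ Σ_{n≥1} p_n q_n. -/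
open MeasureTheory ProbabilityTheory Filter

private lemma aux_toReal (f : ℕ → ℝ) (hf : ∀ n, 0 ≤ f n) :
    (∑' n, ENNReal.ofReal (f n)).toReal = ∑' n, f n := by
  by_cases h : Summable f
  · rw [← ENNReal.ofReal_tsum_of_nonneg hf h, ENNReal.toReal_ofReal (tsum_nonneg hf)]
  · rw [tsum_eq_zero_of_not_summable h]
    have : ∑' n, ENNReal.ofReal (f n) = ⊤ := by
      by_contra htop
      exact h (by simpa [fun n => ENNReal.toReal_ofReal (hf n)] using
        ENNReal.summable_toReal htop)
    simp [this]

private lemma core_swap {Ω : Type*} [MeasurableSpace Ω] (P : Measure Ω) [IsProbabilityMeasure P]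
    (p : ℕ → ℝ) (hp0 : ∀ n, 0 ≤ p n)
    (A : ℕ → Ω → ℝ) (hAmeas : ∀ n, Measurable (A n))
    (hAindep : iIndepFun A P)
    (hAid : ∀ m n, IdentDistrib (A m) (A n) P P)
    (hApos : ∀ n, ∀ᵐ ω ∂P, 0 < A n ω)
    (hS : ∀ᵐ ω ∂P, Summable fun k => A k ω * p k)
    (i j : ℕ) (hij : i ≠ j) (hpi : 0 < p i) (hpj : 0 < p j) (hpij : p j ≤ p i) :
    ∫ ω, (A i ω - A j ω) / (∑' k, A k ω * p k) ∂P ≤ 0 := by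
  classical
  set R : Ω → ℝ := fun ω =>
    (∑' k, ENNReal.ofReal (if k = j then 0 else if k = i then 0 else A k ω * p k)).toReal with hRdef
  have hRnn : ∀ ω, 0 ≤ R ω := fun ω => ENNReal.toReal_nonneg
  have hRM₂ : Measurable[⨆ k ∈ ({i,j}ᶜ : Set ℕ), MeasurableSpace.comap (A k) inferInstance] R := by
    refine (ENNReal.measurable_toReal.comp (Measurable.ennreal_tsum fun k => ?_))
    by_cases h1 : k = j
    · simp [h1]
    by_cases h2 : k = i
    · simp [h1, h2]
    · have hk : k ∈ ({i,j}ᶜ : Set ℕ) := by simp [h1, h2]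
      have hm : Measurable[⨆ k ∈ ({i,j}ᶜ : Set ℕ),
          MeasurableSpace.comap (A k) inferInstance] (A k) := by
        refine Measurable.mono (comap_measurable (A k)) ?_ le_rfl
        exact le_biSup (fun k => MeasurableSpace.comap (A k) inferInstance) hk
      simp only [if_neg h1, if_neg h2]
      exact ENNReal.measurable_ofReal.comp (hm.mul_const _)
  have hRmeas : Measurable R :=
    hRM₂.mono (iSup₂_le fun k _ => (hAmeas k).comap_le) le_rfl
  have hIndep : IndepFun (fun ω => (A i ω, A j ω)) R P := by
    have h := indep_biSup_compl (fun n => (hAmeas n).comap_le) hAindep ({i, j} : Set ℕ)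
    have h' := indep_of_indep_of_le_right h (measurable_iff_comap_le.1 hRM₂)
    refine indep_of_indep_of_le_left h' ?_
    rw [← measurable_iff_comap_le]
    have hle : ∀ k ∈ ({i,j} : Set ℕ), MeasurableSpace.comap (A k) inferInstance ≤
        ⨆ k ∈ ({i,j} : Set ℕ), MeasurableSpace.comap (A k) inferInstance := fun k hk =>
      le_biSup (fun k => MeasurableSpace.comap (A k) inferInstance) hk
    exact (Measurable.mono (comap_measurable (A i)) (hle i (by simp)) le_rfl).prodMk
      (Measurable.mono (comap_measurable (A j)) (hle j (by simp)) le_rfl)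
  set μ : Measure ℝ := P.map (A i) with hμ
  set ν : Measure ℝ := P.map R with hν
  have hμP : IsProbabilityMeasure μ := by
    rw [hμ]; exact Measure.isProbabilityMeasure_map (hAmeas i).aemeasurable
  have hνP : IsProbabilityMeasure ν := by
    rw [hν]; exact Measure.isProbabilityMeasure_map hRmeas.aemeasurable
  set Λ : Measure ((ℝ × ℝ) × ℝ) := (μ.prod μ).prod ν with hΛ
  set F : Ω → (ℝ × ℝ) × ℝ := fun ω => ((A i ω, A j ω), R ω) with hF
  have hFmeas : Measurable F := (((hAmeas i).prodMk (hAmeas j)).prodMk hRmeas)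
  have hmapXY : P.map (fun ω => (A i ω, A j ω)) = μ.prod μ := by
    rw [(indepFun_iff_map_prod_eq_prod_map_map (hAmeas i).aemeasurable
      (hAmeas j).aemeasurable).1 (hAindep.indepFun hij), (hAid j i).map_eq]
  have hmapF : P.map F = Λ := by
    rw [hΛ, ← hmapXY, ← (indepFun_iff_map_prod_eq_prod_map_map
      ((hAmeas i).prodMk (hAmeas j)).aemeasurable hRmeas.aemeasurable).1 hIndep]
  set g : (ℝ × ℝ) × ℝ → ℝ := fun z => (z.1.1 - z.1.2) / (z.1.1 * p i + z.1.2 * p j + z.2)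
    with hg
  have hgmeas : Measurable g := by
    exact ((measurable_fst.comp measurable_fst).sub (measurable_snd.comp measurable_fst)).div
      ((((measurable_fst.comp measurable_fst).mul_const _).add
        ((measurable_snd.comp measurable_fst).mul_const _)).add measurable_snd)
  set σ : (ℝ × ℝ) × ℝ → (ℝ × ℝ) × ℝ := fun z => ((z.1.2, z.1.1), z.2) with hσ
  have hσmeas : Measurable σ :=
    ((measurable_snd.comp measurable_fst).prodMk (measurable_fst.comp measurable_fst)).prodMk
      measurable_snd
  have hσΛ : Λ.map σ = Λ := by
    have hid : σ = Prod.map (Prod.swap) (id : ℝ → ℝ) := rfl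
    rw [hΛ, hid, ← Measure.map_prod_map _ _ measurable_swap measurable_id,
      Measure.prod_swap, Measure.map_id]
  set E : Set ((ℝ × ℝ) × ℝ) := {z | 0 < z.1.1 ∧ 0 < z.1.2 ∧ 0 ≤ z.2} with hE
  have hEmeas : MeasurableSet E := by
    refine MeasurableSet.inter ?_ (MeasurableSet.inter ?_ ?_)
    · exact measurableSet_lt measurable_const (measurable_fst.comp measurable_fst)
    · exact measurableSet_lt measurable_const (measurable_snd.comp measurable_fst)
    · exact measurableSet_le measurable_const measurable_snd
  have hΛE : ∀ᵐ z ∂Λ, z ∈ E := by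
    rw [← hmapF]
    refine (ae_map_iff (p := fun z => z ∈ E) hFmeas.aemeasurable hEmeas).2 ?_
    filter_upwards [hApos i, hApos j] with ω h1 h2
    exact ⟨h1, h2, hRnn ω⟩

  -- integrability of g and g ∘ σ
  have hgbd : ∀ᵐ z ∂Λ, ‖g z‖ ≤ (p i)⁻¹ + (p j)⁻¹ := by
    filter_upwards [hΛE] with z hz
    obtain ⟨hx, hy, hr⟩ := hz
    have hD : 0 < z.1.1 * p i + z.1.2 * p j + z.2 :=
      add_pos_of_pos_of_nonneg (add_pos (mul_pos hx hpi) (mul_pos hy hpj)) hr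
    have habs : |z.1.1 - z.1.2| ≤ z.1.1 + z.1.2 := by
      rw [abs_le]; constructor <;> nlinarith
    calc ‖g z‖ = |z.1.1 - z.1.2| / (z.1.1 * p i + z.1.2 * p j + z.2) := by
          rw [hg, Real.norm_eq_abs, abs_div, abs_of_pos hD]
      _ ≤ (z.1.1 + z.1.2) / (z.1.1 * p i + z.1.2 * p j + z.2) := by gcongr
      _ = z.1.1 / (z.1.1 * p i + z.1.2 * p j + z.2)
          + z.1.2 / (z.1.1 * p i + z.1.2 * p j + z.2) := add_div _ _ _
      _ ≤ z.1.1 / (z.1.1 * p i) + z.1.2 / (z.1.2 * p j) := by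
          have hb1 : z.1.1 / (z.1.1 * p i + z.1.2 * p j + z.2) ≤ z.1.1 / (z.1.1 * p i) := by
            apply div_le_div_of_nonneg_left hx.le (mul_pos hx hpi); nlinarith
          have hb2 : z.1.2 / (z.1.1 * p i + z.1.2 * p j + z.2) ≤ z.1.2 / (z.1.2 * p j) := by
            apply div_le_div_of_nonneg_left hy.le (mul_pos hy hpj); nlinarith
          exact add_le_add hb1 hb2
      _ = (p i)⁻¹ + (p j)⁻¹ := by
          rw [div_mul_eq_div_div, div_self hx.ne', div_mul_eq_div_div, div_self hy.ne',
            one_div, one_div]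
  have hgint : Integrable g Λ :=
    Integrable.mono' (integrable_const _) hgmeas.aestronglyMeasurable hgbd
  have hgσint : Integrable (fun z => g (σ z)) Λ := by
    have := (integrable_map_measure hgmeas.aestronglyMeasurable hσmeas.aemeasurable).1
      (by rw [hσΛ]; exact hgint)
    exact this
  have hIσ : ∫ z, g (σ z) ∂Λ = ∫ z, g z ∂Λ := by
    rw [← integral_map hσmeas.aemeasurable hgmeas.aestronglyMeasurable, hσΛ]
  -- pointwise inequality
  have hpt : ∀ᵐ z ∂Λ, g z + g (σ z) ≤ 0 := by
    filter_upwards [hΛE] with z hz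
    obtain ⟨hx, hy, hr⟩ := hz
    have hD : 0 < z.1.1 * p i + z.1.2 * p j + z.2 :=
      add_pos_of_pos_of_nonneg (add_pos (mul_pos hx hpi) (mul_pos hy hpj)) hr
    have hD' : 0 < z.1.2 * p i + z.1.1 * p j + z.2 :=
      add_pos_of_pos_of_nonneg (add_pos (mul_pos hy hpi) (mul_pos hx hpj)) hr
    have key : g z + g (σ z) =
        -((z.1.1 - z.1.2) ^ 2 * (p i - p j)) /
          ((z.1.1 * p i + z.1.2 * p j + z.2) * (z.1.2 * p i + z.1.1 * p j + z.2)) := by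
      rw [hg, hσ]
      dsimp only
      field_simp
      ring
    rw [key]
    apply div_nonpos_of_nonpos_of_nonneg
    · have : 0 ≤ (z.1.1 - z.1.2) ^ 2 * (p i - p j) :=
        mul_nonneg (sq_nonneg _) (by linarith)
      linarith
    · positivity
  -- identification of the integral
  have hI : ∫ ω, (A i ω - A j ω) / (∑' k, A k ω * p k) ∂P = ∫ z, g z ∂Λ := by
    have hae : (fun ω => (A i ω - A j ω) / (∑' k, A k ω * p k)) =ᵐ[P]
        (fun ω => g (F ω)) := by
      filter_upwards [hS, ae_all_iff.2 hApos] with ω hsum hpos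
      have hsplit : ∑' k, A k ω * p k = A i ω * p i + A j ω * p j + R ω := by
        have hR : R ω = ∑' k, (if k = j then 0 else if k = i then 0 else A k ω * p k) := by
          rw [hRdef]
          exact aux_toReal _ fun k => by
            by_cases h1 : k = j
            · simp [h1]
            by_cases h2 : k = i
            · simp [h1, h2]
            · simp only [if_neg h1, if_neg h2]
              exact mul_nonneg (hpos k).le (hp0 k)
        have hsum2 : Summable (fun k => if k = i then 0 else A k ω * p k) :=
          ⟨_, hasSum_ite_sub_hasSum hsum.hasSum i⟩
        rw [Summable.tsum_eq_add_tsum_ite hsum i, Summable.tsum_eq_add_tsum_ite hsum2 j, if_neg hij.symm, hR]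
        ring
      rw [hF, hg, hsplit]
    calc ∫ ω, (A i ω - A j ω) / (∑' k, A k ω * p k) ∂P
        = ∫ ω, g (F ω) ∂P := integral_congr_ae hae
      _ = ∫ z, g z ∂(P.map F) :=
          (integral_map hFmeas.aemeasurable hgmeas.aestronglyMeasurable).symm
      _ = ∫ z, g z ∂Λ := by rw [hmapF]
  have hsum_le : ∫ z, g z ∂Λ + ∫ z, g (σ z) ∂Λ ≤ 0 := by
    rw [← integral_add hgint hgσint]
    exact integral_nonpos_of_ae hpt
  rw [hI]
  rw [hIσ] at hsum_le
  linarith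

private lemma aux_sum_range_add (f : ℕ → ℝ) (m N : ℕ) :
    ∑ n ∈ Finset.range (m + N), f n
      = (∑ n ∈ Finset.range m, f n) + ∑ j ∈ Finset.range N, f (m + j) := by
  induction N with
  | zero => simp
  | succ N ih =>
    rw [← Nat.add_assoc, Finset.sum_range_succ, ih, Finset.sum_range_succ]
    ring

/-- Pain–Zindy lemma, inequality part. Let `(p n)` and `(q n)` be
nonincreasing sequences of nonnegative reals with `∑ p n = 1`, and let `(A n)` be i.i.d.
a.s. positive random variables with `S = ∑ A k * p k < ∞` a.s. Setting
`p̃ n = A n * p n / S`, one has `E[∑ p̃ n * q n] ≤ ∑ p n * q n`. -/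
theorem stmt_2 {Ω : Type*} [MeasurableSpace Ω] (P : Measure Ω) [IsProbabilityMeasure P]
    (p q : ℕ → ℝ) (hp0 : ∀ n, 0 ≤ p n) (hq0 : ∀ n, 0 ≤ q n)
    (hpm : Antitone p) (hqm : Antitone q) (hp1 : ∑' n, p n = 1)
    (A : ℕ → Ω → ℝ) (hAmeas : ∀ n, Measurable (A n))
    (hAindep : iIndepFun A P)
    (hAid : ∀ m n, IdentDistrib (A m) (A n) P P)
    (hApos : ∀ n, ∀ᵐ ω ∂P, 0 < A n ω)
    (hS : ∀ᵐ ω ∂P, Summable fun k => A k ω * p k) :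
    (∫ ω, ∑' n, (A n ω * p n / ∑' k, A k ω * p k) * q n ∂P) ≤ ∑' n, p n * q n := by
  classical
  -- basic facts on p and q
  have hpsum : Summable p := by
    by_contra h
    rw [tsum_eq_zero_of_not_summable h] at hp1
    norm_num at hp1
  have hp00 : 0 < p 0 := by
    rcases (hp0 0).lt_or_eq with h | h
    · exact h
    · exfalso
      have hz : ∀ n, p n = 0 := fun n => le_antisymm (h ▸ hpm (Nat.zero_le n)) (hp0 n)
      simp only [hz, tsum_zero] at hp1
      norm_num at hp1
  have hpqsum : Summable (fun n => p n * q n) :=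
    Summable.of_nonneg_of_le (fun n => mul_nonneg (hp0 n) (hq0 n))
      (fun n => mul_le_mul_of_nonneg_left (hqm (Nat.zero_le n)) (hp0 n))
      (hpsum.mul_right (q 0))
  -- the good a.e. event
  have hgood : ∀ᵐ ω ∂P, (∀ n, 0 < A n ω) ∧ Summable fun k => A k ω * p k :=
    (ae_all_iff.2 hApos).and hS
  have hSpos : ∀ᵐ ω ∂P, 0 < ∑' k, A k ω * p k := by
    filter_upwards [hgood] with ω hω
    obtain ⟨hpos, hsum⟩ := hω
    have h0 : A 0 ω * p 0 ≤ ∑' k, A k ω * p k :=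
      Summable.le_tsum hsum 0 (fun k _ => mul_nonneg (hpos k).le (hp0 k))
    exact lt_of_lt_of_le (mul_pos (hpos 0) hp00) h0
  -- measurable representative of S
  have hS'meas : Measurable (fun ω => (∑' k, ENNReal.ofReal (A k ω * p k)).toReal) :=
    ENNReal.measurable_toReal.comp (Measurable.ennreal_tsum fun k =>
      ENNReal.measurable_ofReal.comp ((hAmeas k).mul_const _))
  have hSS' : (fun ω => ∑' k, A k ω * p k) =ᵐ[P]
      (fun ω => (∑' k, ENNReal.ofReal (A k ω * p k)).toReal) := by
    filter_upwards [hgood] with ω hω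
    exact (aux_toReal _ fun k => mul_nonneg (hω.1 k).le (hp0 k)).symm
  -- the random weights T n = p̃ n
  have hTaesm : ∀ n, AEStronglyMeasurable
      (fun ω => A n ω * p n / ∑' k, A k ω * p k) P := by
    intro n
    refine AEStronglyMeasurable.congr
      ((((hAmeas n).mul_const (p n)).div hS'meas).aestronglyMeasurable) ?_
    filter_upwards [hSS'] with ω h
    simp only [h, Pi.div_apply]
  have hT01 : ∀ᵐ ω ∂P, ∀ n, 0 ≤ A n ω * p n / ∑' k, A k ω * p k ∧
      A n ω * p n / ∑' k, A k ω * p k ≤ 1 := by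
    filter_upwards [hgood, hSpos] with ω hω hs
    intro n
    constructor
    · exact div_nonneg (mul_nonneg (hω.1 n).le (hp0 n)) hs.le
    · rw [div_le_one hs]
      exact Summable.le_tsum hω.2 n (fun k _ => mul_nonneg (hω.1 k).le (hp0 k))
  have hTint : ∀ n, Integrable (fun ω => A n ω * p n / ∑' k, A k ω * p k) P := by
    intro n
    refine Integrable.mono' (integrable_const 1) (hTaesm n) ?_
    filter_upwards [hT01] with ω hω
    rw [Real.norm_eq_abs, abs_of_nonneg (hω n).1]
    exact (hω n).2
  have hThasSum : ∀ᵐ ω ∂P, HasSum (fun n => A n ω * p n / ∑' k, A k ω * p k) 1 := by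
    filter_upwards [hgood, hSpos] with ω hω hs
    have : HasSum (fun n => A n ω * p n) (∑' k, A k ω * p k) := hω.2.hasSum
    simpa [div_self hs.ne'] using this.div_const (∑' k, A k ω * p k)
  -- expected weights
  set r : ℕ → ℝ := fun n => ∫ ω, A n ω * p n / ∑' k, A k ω * p k ∂P with hrdef
  have hr0 : ∀ n, 0 ≤ r n := by
    intro n
    refine integral_nonneg_of_ae ?_
    filter_upwards [hT01] with ω hω using (hω n).1
  have hRK : ∀ K, ∫ ω, ∑ n ∈ Finset.range K, A n ω * p n / ∑' k, A k ω * p k ∂P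
      = ∑ n ∈ Finset.range K, r n := by
    intro K
    rw [integral_finset_sum _ (fun n _ => hTint n)]
  have hRlim : Filter.Tendsto (fun K => ∑ n ∈ Finset.range K, r n)
      Filter.atTop (nhds 1) := by
    have h := integral_tendsto_of_tendsto_of_monotone
      (f := fun K ω => ∑ n ∈ Finset.range K, A n ω * p n / ∑' k, A k ω * p k)
      (F := fun _ => (1 : ℝ))
      (fun K => integrable_finset_sum _ (fun n _ => hTint n)) (integrable_const 1) ?_ ?_
    · have h1 : ∫ ω, (1 : ℝ) ∂P = 1 := by simp
      rw [h1] at h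
      exact h.congr (fun K => hRK K)
    · filter_upwards [hT01] with ω hω
      exact monotone_nat_of_le_succ fun K => by
        rw [Finset.sum_range_succ]
        exact le_add_of_nonneg_right (hω K).1
    · filter_upwards [hThasSum] with ω hω
      exact hω.tendsto_sum_nat
  -- key pairwise inequality in terms of r
  have hkey : ∀ i j, i < j → p j * r i - p i * r j ≤ 0 := by
    intro i j hij
    have heq : (fun ω => p j * (A i ω * p i / ∑' k, A k ω * p k)
          - p i * (A j ω * p j / ∑' k, A k ω * p k))
        = (fun ω => (p i * p j) * ((A i ω - A j ω) / ∑' k, A k ω * p k)) := by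
      funext ω
      by_cases hs : (∑' k, A k ω * p k) = 0
      · simp [hs]
      · field_simp
    have hint : ∫ ω, (p j * (A i ω * p i / ∑' k, A k ω * p k)
        - p i * (A j ω * p j / ∑' k, A k ω * p k)) ∂P = p j * r i - p i * r j := by
      rw [integral_sub ((hTint i).const_mul _) ((hTint j).const_mul _),
        integral_const_mul, integral_const_mul]
    rw [← hint, heq]
    by_cases hpj : p j = 0
    · simp [hpj]
    · have hpj0 : 0 < p j := (hp0 j).lt_of_ne (Ne.symm hpj)
      have hpij : p j ≤ p i := hpm hij.le
      have hpi0 : 0 < p i := lt_of_lt_of_le hpj0 hpij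
      rw [integral_const_mul]
      exact mul_nonpos_of_nonneg_of_nonpos (mul_nonneg (hp0 i) (hp0 j))
        (core_swap P p hp0 A hAmeas hAindep hAid hApos hS i j hij.ne hpi0 hpj0 hpij)
  -- domination of partial sums
  have hdom : ∀ m, ∑ n ∈ Finset.range m, r n ≤ ∑ n ∈ Finset.range m, p n := by
    intro m
    have key2 : ∀ N, (∑ j ∈ Finset.range N, p (m + j)) * (∑ n ∈ Finset.range m, r n)
        ≤ (∑ n ∈ Finset.range m, p n) * (∑ j ∈ Finset.range N, r (m + j)) := by
      intro N
      rw [← sub_nonpos]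
      have hexp : (∑ j ∈ Finset.range N, p (m + j)) * (∑ n ∈ Finset.range m, r n)
          - (∑ n ∈ Finset.range m, p n) * (∑ j ∈ Finset.range N, r (m + j))
          = ∑ i ∈ Finset.range m, ∑ j ∈ Finset.range N,
              (p (m + j) * r i - p i * r (m + j)) := by
        have e1 : (∑ j ∈ Finset.range N, p (m + j)) * (∑ n ∈ Finset.range m, r n)
            = ∑ i ∈ Finset.range m, ∑ j ∈ Finset.range N, p (m + j) * r i := by
          rw [Finset.sum_mul_sum]
          exact Finset.sum_comm
        have e2 : (∑ n ∈ Finset.range m, p n) * (∑ j ∈ Finset.range N, r (m + j))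
            = ∑ i ∈ Finset.range m, ∑ j ∈ Finset.range N, p i * r (m + j) := by
          rw [Finset.sum_mul_sum]
        rw [e1, e2]
        simp [Finset.sum_sub_distrib]
      rw [hexp]
      refine Finset.sum_nonpos fun i hi => Finset.sum_nonpos fun j _ => ?_
      exact hkey i (m + j) (lt_of_lt_of_le (Finset.mem_range.1 hi) (Nat.le_add_right m j))
    have hPm : Filter.Tendsto (fun N => ∑ j ∈ Finset.range N, p (m + j))
        Filter.atTop (nhds (1 - ∑ n ∈ Finset.range m, p n)) := by
      have hshift : Filter.Tendsto (fun N : ℕ => m + N) Filter.atTop Filter.atTop := by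
        simpa [Nat.add_comm] using Filter.tendsto_add_atTop_nat m
      have h0 := hpsum.hasSum.tendsto_sum_nat
      rw [hp1] at h0
      have h2 := (h0.comp hshift).sub (tendsto_const_nhds (x := ∑ n ∈ Finset.range m, p n))
      refine h2.congr fun N => ?_
      simp only [Function.comp_apply, aux_sum_range_add p m N]
      ring
    have hRm : Filter.Tendsto (fun N => ∑ j ∈ Finset.range N, r (m + j))
        Filter.atTop (nhds (1 - ∑ n ∈ Finset.range m, r n)) := by
      have hshift : Filter.Tendsto (fun N : ℕ => m + N) Filter.atTop Filter.atTop := by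
        simpa [Nat.add_comm] using Filter.tendsto_add_atTop_nat m
      have h2 := (hRlim.comp hshift).sub (tendsto_const_nhds (x := ∑ n ∈ Finset.range m, r n))
      refine h2.congr fun N => ?_
      simp only [Function.comp_apply, aux_sum_range_add r m N]
      ring
    have hlim := le_of_tendsto_of_tendsto'
      (hPm.mul_const (∑ n ∈ Finset.range m, r n))
      (tendsto_const_nhds.mul hRm) key2
    have hrm0 : 0 ≤ ∑ n ∈ Finset.range m, r n :=
      Finset.sum_nonneg fun n _ => hr0 n
    have hpm0 : 0 ≤ ∑ n ∈ Finset.range m, p n :=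
      Finset.sum_nonneg fun n _ => hp0 n
    nlinarith [hlim]
  -- summability of the weighted series
  have hTqsum : ∀ᵐ ω ∂P, Summable (fun n => (A n ω * p n / ∑' k, A k ω * p k) * q n) := by
    filter_upwards [hThasSum, hT01] with ω hω h01
    exact Summable.of_nonneg_of_le (fun n => mul_nonneg (h01 n).1 (hq0 n))
      (fun n => mul_le_mul_of_nonneg_left (hqm (Nat.zero_le n)) (h01 n).1)
      (hω.summable.mul_right (q 0))
  -- integrability of the full integrand
  have hGaesm : AEStronglyMeasurable
      (fun ω => ∑' n, (A n ω * p n / ∑' k, A k ω * p k) * q n) P := by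
    have hK : ∀ K : ℕ, AEMeasurable (fun ω => ∑ n ∈ Finset.range K,
        (A n ω * p n / ∑' k, A k ω * p k) * q n) P := fun K =>
      Finset.aemeasurable_fun_sum _ fun n _ => ((hTaesm n).aemeasurable.mul_const (q n))
    refine (aemeasurable_of_tendsto_metrizable_ae' hK ?_).aestronglyMeasurable
    filter_upwards [hTqsum] with ω hω
    exact hω.hasSum.tendsto_sum_nat
  have hGbd : ∀ᵐ ω ∂P, ‖∑' n, (A n ω * p n / ∑' k, A k ω * p k) * q n‖ ≤ q 0 := by
    filter_upwards [hThasSum, hT01, hTqsum] with ω hsum1 h01 hq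
    have h1 : ∑' n, (A n ω * p n / ∑' k, A k ω * p k) * q n
        ≤ ∑' n, (A n ω * p n / ∑' k, A k ω * p k) * q 0 :=
      Summable.tsum_le_tsum (fun n => mul_le_mul_of_nonneg_left (hqm (Nat.zero_le n)) (h01 n).1)
        hq (hsum1.summable.mul_right (q 0))
    have h2 : ∑' n, (A n ω * p n / ∑' k, A k ω * p k) * q 0 = q 0 := by
      rw [tsum_mul_right, hsum1.tsum_eq, one_mul]
    have h3 : 0 ≤ ∑' n, (A n ω * p n / ∑' k, A k ω * p k) * q n :=
      tsum_nonneg fun n => mul_nonneg (h01 n).1 (hq0 n)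
    rw [Real.norm_eq_abs, abs_of_nonneg h3]
    linarith
  have hGint : Integrable (fun ω => ∑' n, (A n ω * p n / ∑' k, A k ω * p k) * q n) P :=
    Integrable.mono' (integrable_const (q 0)) hGaesm hGbd
  -- truncated bound on the integral
  have hGle : ∀ m, (∫ ω, ∑' n, (A n ω * p n / ∑' k, A k ω * p k) * q n ∂P) ≤
      (∑ n ∈ Finset.range m, r n * q n) + q m * (1 - ∑ n ∈ Finset.range m, r n) := by
    intro m
    have hb : ∀ᵐ ω ∂P, (∑' n, (A n ω * p n / ∑' k, A k ω * p k) * q n) ≤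
        (∑ n ∈ Finset.range m, (A n ω * p n / ∑' k, A k ω * p k) * q n)
          + q m * (1 - ∑ n ∈ Finset.range m, A n ω * p n / ∑' k, A k ω * p k) := by
      filter_upwards [hThasSum, hT01, hTqsum] with ω hsum1 h01 hq
      have hsplit := Summable.sum_add_tsum_nat_add (f := fun n =>
        (A n ω * p n / ∑' k, A k ω * p k) * q n) m hq
      have htail : (∑' j, (A (j + m) ω * p (j + m) / ∑' k, A k ω * p k) * q (j + m))
          ≤ ∑' j, (A (j + m) ω * p (j + m) / ∑' k, A k ω * p k) * q m :=
        Summable.tsum_le_tsum (fun j => mul_le_mul_of_nonneg_left (hqm (Nat.le_add_left m j))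
            (h01 (j + m)).1)
          ((summable_nat_add_iff m).2 hq)
          (((summable_nat_add_iff m).2 hsum1.summable).mul_right (q m))
      have hTsplit := Summable.sum_add_tsum_nat_add (f := fun n =>
        A n ω * p n / ∑' k, A k ω * p k) m hsum1.summable
      rw [hsum1.tsum_eq] at hTsplit
      have h4 : (∑' j, (A (j + m) ω * p (j + m) / ∑' k, A k ω * p k) * q m)
          = (1 - ∑ n ∈ Finset.range m, A n ω * p n / ∑' k, A k ω * p k) * q m := by
        rw [tsum_mul_right]
        congr 1
        linarith
      rw [h4] at htail
      rw [← hsplit]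
      linarith
    have hint1 : Integrable (fun ω => ∑ n ∈ Finset.range m,
        (A n ω * p n / ∑' k, A k ω * p k) * q n) P :=
      integrable_finset_sum _ fun n _ => (hTint n).mul_const (q n)
    have hint2 : Integrable (fun ω =>
        (1 : ℝ) - ∑ n ∈ Finset.range m, A n ω * p n / ∑' k, A k ω * p k) P :=
      (integrable_const 1).sub (integrable_finset_sum _ fun n _ => hTint n)
    have hint2' : Integrable (fun ω => q m *
        ((1 : ℝ) - ∑ n ∈ Finset.range m, A n ω * p n / ∑' k, A k ω * p k)) P :=
      hint2.const_mul (q m)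
    have hintsum : Integrable (fun ω =>
        ∑ n ∈ Finset.range m, A n ω * p n / ∑' k, A k ω * p k) P :=
      integrable_finset_sum _ fun n _ => hTint n
    have hRHSint : Integrable (fun ω =>
        (∑ n ∈ Finset.range m, (A n ω * p n / ∑' k, A k ω * p k) * q n)
          + q m * (1 - ∑ n ∈ Finset.range m, A n ω * p n / ∑' k, A k ω * p k)) P :=
      hint1.add hint2'
    have hmono := integral_mono_ae hGint hRHSint hb
    refine hmono.trans (le_of_eq ?_)
    rw [integral_add hint1 hint2', integral_finset_sum _
      (fun n _ => (hTint n).mul_const (q n)), integral_const_mul,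
      integral_sub (integrable_const 1) hintsum,
      integral_const, hRK m]
    simp only [measure_univ, ENNReal.toReal_one, probReal_univ, smul_eq_mul, one_mul, mul_one]
    congr 1
    exact Finset.sum_congr rfl fun n _ => integral_mul_const (q n) _
  -- Abel summation inequality
  have habel : ∀ m, ∑ n ∈ Finset.range m, q n * (r n - p n)
      ≤ q m * (∑ n ∈ Finset.range m, (r n - p n)) := by
    intro m
    induction m with
    | zero => simp
    | succ m ih =>
      have hD : ∑ n ∈ Finset.range (m + 1), (r n - p n) ≤ 0 := by
        rw [Finset.sum_sub_distrib]
        linarith [hdom (m + 1)]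
      calc ∑ n ∈ Finset.range (m + 1), q n * (r n - p n)
          = (∑ n ∈ Finset.range m, q n * (r n - p n)) + q m * (r m - p m) :=
            Finset.sum_range_succ _ m
        _ ≤ q m * (∑ n ∈ Finset.range m, (r n - p n)) + q m * (r m - p m) := by
            linarith [ih]
        _ = q m * (∑ n ∈ Finset.range (m + 1), (r n - p n)) := by
            rw [Finset.sum_range_succ]; ring
        _ ≤ q (m + 1) * (∑ n ∈ Finset.range (m + 1), (r n - p n)) :=
            mul_le_mul_of_nonpos_right (hqm (Nat.le_succ m)) hD
  -- final bound for every m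
  have hfinal : ∀ m, (∫ ω, ∑' n, (A n ω * p n / ∑' k, A k ω * p k) * q n ∂P) ≤
      (∑' n, p n * q n) + q 0 * (1 - ∑ n ∈ Finset.range m, p n) := by
    intro m
    have h1 := hGle m
    have h2 := habel m
    have hPm1 : ∑ n ∈ Finset.range m, p n ≤ 1 := by
      rw [← hp1]
      exact Summable.sum_le_tsum _ (fun n _ => hp0 n) hpsum
    have hpq : ∑ n ∈ Finset.range m, p n * q n ≤ ∑' n, p n * q n :=
      Summable.sum_le_tsum _ (fun n _ => mul_nonneg (hp0 n) (hq0 n)) hpqsum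
    have hqm0 : q m ≤ q 0 := hqm (Nat.zero_le m)
    have e : ∑ n ∈ Finset.range m, r n * q n
        = (∑ n ∈ Finset.range m, p n * q n) + ∑ n ∈ Finset.range m, q n * (r n - p n) := by
      rw [← Finset.sum_add_distrib]
      exact Finset.sum_congr rfl fun n _ => by ring
    have hsumd : ∑ n ∈ Finset.range m, (r n - p n)
        = (∑ n ∈ Finset.range m, r n) - ∑ n ∈ Finset.range m, p n :=
      Finset.sum_sub_distrib _ _
    have h3 : q m * (1 - ∑ n ∈ Finset.range m, p n)
        ≤ q 0 * (1 - ∑ n ∈ Finset.range m, p n) :=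
      mul_le_mul_of_nonneg_right hqm0 (by linarith)
    have h4 : q m * ((∑ n ∈ Finset.range m, r n) - ∑ n ∈ Finset.range m, p n)
        + q m * (1 - ∑ n ∈ Finset.range m, r n)
        = q m * (1 - ∑ n ∈ Finset.range m, p n) := by ring
    rw [hsumd] at h2
    rw [e] at h1
    linarith
  -- pass to the limit
  have h0 := hpsum.hasSum.tendsto_sum_nat
  rw [hp1] at h0
  have htend : Filter.Tendsto (fun m => (∑' n, p n * q n)
      + q 0 * (1 - ∑ n ∈ Finset.range m, p n)) Filter.atTop
      (nhds ((∑' n, p n * q n) + q 0 * (1 - 1))) :=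
    tendsto_const_nhds.add (((tendsto_const_nhds.sub h0).const_mul (q 0)))
  have := ge_of_tendsto' htend hfinal
  simpa using this
end

section
/- Let α > 1 and c > 0 be real numbers, and let (a_{k,j})_{k,j≥1} be nonnegative real numbers such that for every k ≥ 1 the sum Σ_{j≥1} a_{k,j} is finite. Assume that for all k ≥ 1 one has 1 + Σ_{j≥1} a_{k,j} = c · (1 + Σ_{j≥1} a_{k,j}^α)^{1/α}, and that Σ_{j≥1} a_{k,j} → 0 as k → ∞. Then c = 1 and a_{k,j} = 0 for all k, j ≥ 1. -/
open Filter

/-- Let `α > 1`, `c > 0` and `(a k j)` be nonnegative reals with each row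
summable. If `1 + ∑_j a k j = c * (1 + ∑_j (a k j)^α)^(1/α)` for every `k` and
`∑_j a k j → 0` as `k → ∞`, then `c = 1` and all the `a k j` vanish. -/
theorem stmt_4 (α c : ℝ) (hα : 1 < α) (hc : 0 < c)
    (a : ℕ → ℕ → ℝ) (ha0 : ∀ k j, 0 ≤ a k j)
    (hsum : ∀ k, Summable fun j => a k j)
    (heq : ∀ k, 1 + ∑' j, a k j = c * (1 + ∑' j, a k j ^ α) ^ (1 / α))
    (hlim : Tendsto (fun k => ∑' j, a k j) atTop (nhds 0)) :
    c = 1 ∧ ∀ k j, a k j = 0 := by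
  have hα0 : (0:ℝ) < α := lt_trans one_pos hα
  have hα1 : (0:ℝ) ≤ α - 1 := by linarith
  set S : ℕ → ℝ := fun k => ∑' j, a k j with hS
  have hS0 : ∀ k, 0 ≤ S k := fun k => tsum_nonneg (ha0 k)
  have hle : ∀ k j, a k j ≤ S k := fun k j =>
    Summable.le_tsum (hsum k) j (fun i _ => ha0 k i)
  -- pointwise bound a^α ≤ S^{α-1} * a
  have hpt : ∀ k j, a k j ^ α ≤ S k ^ (α - 1) * a k j := by
    intro k j
    rcases eq_or_lt_of_le (ha0 k j) with h | h
    · rw [← h, Real.zero_rpow (ne_of_gt hα0), mul_zero]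
    · have : a k j ^ α = a k j ^ (α - 1) * a k j := by
        rw [← Real.rpow_add_one (ne_of_gt h)]; ring_nf
      rw [this]
      exact mul_le_mul_of_nonneg_right
        (Real.rpow_le_rpow (ha0 k j) (hle k j) hα1) (ha0 k j)
  have hsumα : ∀ k, Summable fun j => a k j ^ α := by
    intro k
    exact Summable.of_nonneg_of_le (fun j => Real.rpow_nonneg (ha0 k j) α)
      (hpt k) ((hsum k).mul_left _)
  set T : ℕ → ℝ := fun k => ∑' j, a k j ^ α with hT
  have hT0 : ∀ k, 0 ≤ T k := fun k =>
    tsum_nonneg (fun j => Real.rpow_nonneg (ha0 k j) α)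
  have hTle : ∀ k, T k ≤ S k ^ α := by
    intro k
    calc T k ≤ ∑' j, S k ^ (α - 1) * a k j :=
          Summable.tsum_le_tsum (hpt k) (hsumα k) ((hsum k).mul_left _)
      _ = S k ^ (α - 1) * S k := tsum_mul_left
      _ = S k ^ α := by
          rcases eq_or_lt_of_le (hS0 k) with h | h
          · simp [← h, Real.zero_rpow (ne_of_gt hα0)]
          · rw [← Real.rpow_add_one (ne_of_gt h)]; ring_nf
  -- T → 0
  have hTlim : Tendsto T atTop (nhds 0) := by
    have h1 : Tendsto (fun k => S k ^ α) atTop (nhds 0) := by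
      have := hlim.rpow_const (p := α) (Or.inr (le_of_lt hα0))
      rwa [Real.zero_rpow (ne_of_gt hα0)] at this
    exact squeeze_zero hT0 hTle h1
  -- c = 1 by taking limits in heq
  have hceq : c = 1 := by
    have hL : Tendsto (fun k => 1 + S k) atTop (nhds 1) := by
      have := hlim.const_add 1; simpa using this
    have hR : Tendsto (fun k => c * (1 + T k) ^ (1 / α)) atTop (nhds c) := by
      have h1 : Tendsto (fun k => (1:ℝ) + T k) atTop (nhds 1) := by
        have := hTlim.const_add 1; simpa using this
      have h2 := h1.rpow_const (p := 1/α) (Or.inl one_ne_zero)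
      rw [Real.one_rpow] at h2
      have := h2.const_mul c; simpa using this
    have hL' : Tendsto (fun k => 1 + S k) atTop (nhds c) := by
      have : (fun k => 1 + S k) = fun k => c * (1 + T k) ^ (1 / α) :=
        funext heq
      rw [this]; exact hR
    exact tendsto_nhds_unique hL' hL
  subst hceq
  refine ⟨rfl, fun k j => ?_⟩
  -- show S k = 0
  have hSk : S k = 0 := by
    by_contra h
    have hSpos : 0 < S k := lt_of_le_of_ne (hS0 k) (Ne.symm h)
    have h1T : (0:ℝ) < 1 + T k := by linarith [hT0 k]
    have hpow : (1 + S k) ^ α = 1 + T k := by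
      have := heq k
      rw [one_mul] at this
      rw [this, one_div, Real.rpow_inv_rpow (le_of_lt h1T) (ne_of_gt hα0)]
    -- strict superadditivity: (1+S)^α > 1 + S^α
    have hstrict : 1 + S k ^ α < (1 + S k) ^ α := by
      have e1 : (1 + S k) ^ α = (1 + S k) ^ (α - 1) * (1 + S k) := by
        rw [← Real.rpow_add_one (by positivity)]; ring_nf
      have h2 : (1:ℝ) < (1 + S k) ^ (α - 1) := by
        rw [Real.one_lt_rpow_iff_of_pos (by positivity)]
        exact Or.inl ⟨by linarith, by linarith⟩
      have h3 : S k ^ (α - 1) * S k ≤ (1 + S k) ^ (α - 1) * S k :=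
        mul_le_mul_of_nonneg_right
          (Real.rpow_le_rpow (hS0 k) (by linarith) hα1) (hS0 k)
      have h4 : S k ^ α = S k ^ (α - 1) * S k := by
        rw [← Real.rpow_add_one (ne_of_gt hSpos)]; ring_nf
      calc 1 + S k ^ α = 1 + S k ^ (α - 1) * S k := by rw [h4]
        _ ≤ 1 + (1 + S k) ^ (α - 1) * S k := by linarith
        _ < (1 + S k) ^ (α - 1) + (1 + S k) ^ (α - 1) * S k := by linarith
        _ = (1 + S k) ^ (α - 1) * (1 + S k) := by ring
        _ = (1 + S k) ^ α := e1.symm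
    have : (1 + S k) ^ α ≤ 1 + S k ^ α := by
      rw [hpow]; linarith [hTle k]
    linarith
  have := hle k j
  rw [hSk] at this
  exact le_antisymm this (ha0 k j)
end
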